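/- For integers ℓ ≥ 2 and k ≥ 1, the circular chromatic number of the signed bipartite graph BQ̂(ℓ, 2k+1) equals 4. -/

import Mathlib

open scoped Classical

/-- Adjacency relation of the cylindrical grid `C_{ℓ×m}`: vertex `v_{i,j}` is adjacent to
`v_{i+1,j-1}` and `v_{i+1,j}` (second index mod `m`). -/
def gridRel (ℓ m : ℕ) (x y : Fin ℓ × ZMod m) : Prop :=
  (y.1 : ℕ) = (x.1 : ℕ) + 1 ∧ (y.2 = x.2 - 1 ∨ y.2 = x.2)

/-- The positive edges of `BQ̂(ℓ, 2k+1)`: `v_{1,j}` is joined to `v_{2,j+k}` by a positive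
edge. -/
def bqOddPos (ℓ k : ℕ) :
    Option (Fin ℓ × ZMod (2 * k + 1)) → Option (Fin ℓ × ZMod (2 * k + 1)) → Prop
  | some x, some y => (x.1 : ℕ) = 0 ∧ (y.1 : ℕ) = 1 ∧ y.2 = x.2 + (k : ZMod (2 * k + 1))
  | _, _ => False

/-- Generating relation for the signed bipartite graph `BQ̂(ℓ, 2k+1)`: the cylindrical grid
`C_{ℓ×(2k+1)}` with all edges negative, plus positive edges `v_{1,j}v_{2,j+k}`, plus a new
vertex `u` (encoded as `none`) joined by negative edges to all vertices `v_{ℓ,j}`. -/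
def bqOddRel (ℓ k : ℕ) :
    Option (Fin ℓ × ZMod (2 * k + 1)) → Option (Fin ℓ × ZMod (2 * k + 1)) → Prop
  | some x, some y => gridRel ℓ (2 * k + 1) x y ∨ bqOddPos ℓ k (some x) (some y)
  | some x, none => (x.1 : ℕ) = ℓ - 1
  | none, _ => False

/-- The underlying graph of the signed bipartite graph `BQ̂(ℓ, 2k+1)`. -/
def BQOdd (ℓ k : ℕ) : SimpleGraph (Option (Fin ℓ × ZMod (2 * k + 1))) :=
  SimpleGraph.fromRel (bqOddRel ℓ k)

/-- A circular `r`-coloring of a signed graph `(G, σ)`, where the sign of an edge `uv` is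
positive iff `pos u v ∨ pos v u`:  vertices are mapped to the circle `O_r` (modelled as
`AddCircle r`) so that the endpoints of every negative edge are at distance at least `1`, and
the endpoints of every positive edge are at distance at least `1` from the antipode of each
other. -/
def IsSignedCircColoring {V : Type*} (r : ℝ) (G : SimpleGraph V) (pos : V → V → Prop)
    (c : V → AddCircle r) : Prop :=
  ∀ u v, G.Adj u v →
    if pos u v ∨ pos v u then 1 ≤ dist (c u) (c v + ((r / 2 : ℝ) : AddCircle r))
    else 1 ≤ dist (c u) (c v)

set_option maxHeartbeats 1000000

private lemma bq_coe_eq_of_sub (r v w : ℝ) (n : ℤ) (h : v - w = n * r) :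
    ((v : ℝ) : AddCircle r) = ((w : ℝ) : AddCircle r) := by
  rw [QuotientAddGroup.eq_iff_sub_mem]
  exact AddSubgroup.mem_zmultiples_iff.2 ⟨n, by rw [zsmul_eq_mul]; linarith⟩

private lemma bq_coe_eq_iff' {r : ℝ} {v w : ℝ} (h : (v : AddCircle r) = (w : AddCircle r)) :
    ∃ n : ℤ, v - w = n * r := by
  rw [QuotientAddGroup.eq_iff_sub_mem] at h
  obtain ⟨n, hn⟩ := AddSubgroup.mem_zmultiples_iff.1 h
  exact ⟨n, by rw [← hn, zsmul_eq_mul]⟩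

private lemma bq_normLeLift {r : ℝ} (hr : 0 < r) {z : AddCircle r} {v : ℝ}
    (h : ((v : ℝ) : AddCircle r) = z) : ‖z‖ ≤ |v| := by
  subst h
  rw [AddCircle.norm_eq' r hr]
  have h2 := round_le (r⁻¹ * v) 0
  rw [Int.cast_zero, sub_zero] at h2
  calc r * |r⁻¹ * v - round (r⁻¹ * v)| ≤ r * |r⁻¹ * v| := by gcongr
    _ = |v| := by rw [abs_mul, abs_of_pos (inv_pos.2 hr)]; field_simp

private lemma bq_existsRep {r : ℝ} (hr : 0 < r) (z : AddCircle r) :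
    ∃ x : ℝ, 0 ≤ x ∧ x < r ∧ ((x : ℝ) : AddCircle r) = z := by
  obtain ⟨y, rfl⟩ := QuotientAddGroup.mk_surjective z
  refine ⟨toIcoMod hr 0 y, (toIcoMod_mem_Ico' hr y).1, by simpa using (toIcoMod_mem_Ico' hr y).2, ?_⟩
  rw [QuotientAddGroup.eq_iff_sub_mem, toIcoMod_sub_self]
  exact AddSubgroup.mem_zmultiples_iff.2 ⟨-(toIcoDiv hr 0 y), by rw [neg_zsmul]⟩

private lemma bq_liftUnique {r : ℝ} (hr : 0 < r) {v w : ℝ}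
    (h : (v : AddCircle r) = (w : AddCircle r)) (hlt : |v - w| < r) : v = w := by
  obtain ⟨n, hn⟩ := bq_coe_eq_iff' h
  have h1 : |(n : ℝ) * r| < r := by rw [← hn]; exact hlt
  rw [abs_mul, abs_of_pos hr] at h1
  have h2 : n = 0 := by
    by_contra hne
    have h3 : (1 : ℤ) ≤ |n| := Int.one_le_abs hne
    have h4 : (1 : ℝ) ≤ |(n : ℝ)| := by
      calc (1 : ℝ) ≤ ((|n| : ℤ) : ℝ) := by exact_mod_cast h3
        _ = |(n : ℝ)| := by push_cast; ring
    nlinarith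
  rw [h2] at hn
  push_cast at hn
  linarith

private lemma bq_negLift {r : ℝ} (hr : 0 < r) {z w : AddCircle r} (h : 1 ≤ dist z w) :
    ∃ d : ℝ, 1 ≤ d ∧ d ≤ r - 1 ∧ ((d : ℝ) : AddCircle r) = w - z := by
  obtain ⟨x, hx0, hxr, hxz⟩ := bq_existsRep hr (w - z)
  have hnorm : 1 ≤ ‖w - z‖ := by rwa [dist_eq_norm, norm_sub_rev] at h
  have h1 : 1 ≤ x := by
    have := bq_normLeLift hr hxz
    rw [abs_of_nonneg hx0] at this
    linarith
  have hxz2 : ((x - r : ℝ) : AddCircle r) = w - z :=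
    (bq_coe_eq_of_sub r (x - r) x (-1) (by ring)).trans hxz
  have h2 : 1 ≤ |x - r| := le_trans hnorm (bq_normLeLift hr hxz2)
  rw [abs_of_nonpos (by linarith)] at h2
  exact ⟨x, h1, by linarith, hxz⟩

private lemma bq_posLift {r : ℝ} (hr : 0 < r) {z w : AddCircle r}
    (h : 1 ≤ dist z (w + ((r / 2 : ℝ) : AddCircle r))) :
    ∃ g : ℝ, |g| ≤ r / 2 - 1 ∧ ((g : ℝ) : AddCircle r) = w - z := by
  obtain ⟨x, hx0, hxr, hxz⟩ := bq_existsRep hr (w - z)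
  have hnorm : 1 ≤ ‖(w + ((r / 2 : ℝ) : AddCircle r)) - z‖ := by
    rwa [dist_eq_norm, norm_sub_rev] at h
  have hlift : ((x - r / 2 : ℝ) : AddCircle r) = (w + ((r / 2 : ℝ) : AddCircle r)) - z := by
    have e1 : (w + ((r / 2 : ℝ) : AddCircle r)) - z = (w - z) + ((r / 2 : ℝ) : AddCircle r) := by
      abel
    rw [e1, ← hxz, ← AddCircle.coe_add]
    exact bq_coe_eq_of_sub r _ _ (-1) (by ring)
  have h2 : 1 ≤ |x - r / 2| := le_trans hnorm (bq_normLeLift hr hlift)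
  rcases abs_cases (x - r / 2) with ⟨he, hge⟩ | ⟨he, hneg⟩
  · rw [he] at h2
    refine ⟨x - r, ?_, ?_⟩
    · rw [abs_of_nonpos (by linarith)]; linarith
    · exact (bq_coe_eq_of_sub r (x - r) x (-1) (by ring)).trans hxz
  · rw [he] at h2
    exact ⟨x, by rw [abs_of_nonneg hx0]; linarith, hxz⟩

private lemma bq_kne0 (k : ℕ) (hk : 1 ≤ k) : ((k : ℕ) : ZMod (2 * k + 1)) ≠ 0 := by
  rw [Ne, ZMod.natCast_eq_zero_iff]
  intro h
  have := Nat.le_of_dvd (by omega) h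
  omega

private lemma bq_kne1 (k : ℕ) (hk : 1 ≤ k) : ((k : ℕ) : ZMod (2 * k + 1)) ≠ -1 := by
  intro h
  have h2 : (((k + 1 : ℕ)) : ZMod (2 * k + 1)) = 0 := by
    push_cast [h]; ring
  rw [ZMod.natCast_eq_zero_iff] at h2
  have := Nat.le_of_dvd (by omega) h2
  omega

private lemma bq_pos_none_left {ℓ k : ℕ} {y : Option (Fin ℓ × ZMod (2 * k + 1))} :
    ¬ bqOddPos ℓ k none y := fun h => h

private lemma bq_pos_none_right {ℓ k : ℕ} {x : Option (Fin ℓ × ZMod (2 * k + 1))} :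
    ¬ bqOddPos ℓ k x none := by cases x <;> exact fun h => h

private lemma bq_rel_adj {ℓ k : ℕ} {x y : Option (Fin ℓ × ZMod (2 * k + 1))}
    (h : bqOddRel ℓ k x y) : (BQOdd ℓ k).Adj x y := by
  rw [BQOdd, SimpleGraph.fromRel_adj]
  refine ⟨?_, Or.inl h⟩
  cases x with
  | none => exact (h : False).elim
  | some a =>
    cases y with
    | none => simp
    | some b =>
      intro he
      injection he with he
      rcases h with ⟨h1, _⟩ | ⟨h1, h2, _⟩
      · rw [he] at h1; omega
      · rw [he] at h1; omega

private lemma bq_no_coloring (ℓ k : ℕ) (hℓ : 2 ≤ ℓ) (hk : 1 ≤ k) (r : ℝ)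
    (hr2 : 2 ≤ r) (hr4 : r < 4)
    (c : Option (Fin ℓ × ZMod (2 * k + 1)) → AddCircle r)
    (hc : IsSignedCircColoring r (BQOdd ℓ k) (bqOddPos ℓ k) c) : False := by
  have hr0 : (0 : ℝ) < r := by linarith
  simp only [IsSignedCircColoring] at hc
  set a0 : Fin ℓ := ⟨0, by omega⟩ with ha0
  set a1 : Fin ℓ := ⟨1, by omega⟩ with ha1
  -- negative grid edges
  have hgridneg : ∀ (a b : Fin ℓ) (j j' : ZMod (2 * k + 1)), (b : ℕ) = (a : ℕ) + 1 →
      (j' = j - 1 ∨ j' = j) → 1 ≤ dist (c (some (a, j))) (c (some (b, j'))) := by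
    intro a b j j' hab hj
    have hadj := bq_rel_adj (ℓ := ℓ) (k := k)
      (x := some (a, j)) (y := some (b, j')) (Or.inl ⟨hab, hj⟩)
    have hcc := hc _ _ hadj
    rwa [if_neg ?_] at hcc
    rintro (hp | hp)
    · obtain ⟨h1, h2, h3⟩ := hp
      simp only at h1 h2 h3
      rcases hj with hj | hj
      · have h4 : j + (-1 : ZMod (2 * k + 1)) = j + (k : ZMod (2 * k + 1)) := by
          rw [← sub_eq_add_neg, ← hj]; exact h3
        exact bq_kne1 k hk (add_left_cancel h4).symm
      · rw [hj] at h3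
        have h4 : j + (0 : ZMod (2 * k + 1)) = j + (k : ZMod (2 * k + 1)) := by
          rw [add_zero]; exact h3
        exact bq_kne0 k hk (add_left_cancel h4).symm
    · obtain ⟨h1, h2, h3⟩ := hp
      simp only at h1 h2 h3
      omega
  -- positive edges
  have hpos : ∀ j : ZMod (2 * k + 1),
      1 ≤ dist (c (some (a0, j))) (c (some (a1, j + (k : ZMod (2 * k + 1))))
        + ((r / 2 : ℝ) : AddCircle r)) := by
    intro j
    have hrel : bqOddRel ℓ k (some (a0, j)) (some (a1, j + (k : ZMod (2 * k + 1)))) :=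
      Or.inr ⟨rfl, rfl, rfl⟩
    have hcc := hc _ _ (bq_rel_adj hrel)
    have hposTrue : bqOddPos ℓ k (some (a0, j)) (some (a1, j + (k : ZMod (2 * k + 1)))) ∨
        bqOddPos ℓ k (some (a1, j + (k : ZMod (2 * k + 1)))) (some (a0, j)) :=
      Or.inl ⟨rfl, rfl, rfl⟩
    rwa [if_pos hposTrue] at hcc
  -- edges to the extra vertex u
  have hu : ∀ j : ZMod (2 * k + 1),
      1 ≤ dist (c none) (c (some (⟨ℓ - 1, by omega⟩, j))) := by
    intro j
    have hrel : bqOddRel ℓ k (some ((⟨ℓ - 1, by omega⟩ : Fin ℓ), j)) none := rfl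
    have hcc := hc _ _ (bq_rel_adj hrel)
    rw [if_neg ?_] at hcc
    · rwa [dist_comm] at hcc
    · rintro (hp | hp)
      · exact bq_pos_none_right hp
      · exact bq_pos_none_left hp
  -- telescoping lifts for each row, by downward induction from row ℓ-1
  have hstep : ∀ (a b : Fin ℓ), (b : ℕ) = (a : ℕ) + 1 →
      (∃ w : ZMod (2 * k + 1) → ℝ, (∀ j, |w j| ≤ r - 2) ∧
        (∀ j, ((w j : ℝ) : AddCircle r) = c (some (b, j + 1)) - c (some (b, j))) ∧
        ∑ j : ZMod (2 * k + 1), w j = 0) →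
      (∃ w : ZMod (2 * k + 1) → ℝ, (∀ j, |w j| ≤ r - 2) ∧
        (∀ j, ((w j : ℝ) : AddCircle r) = c (some (a, j + 1)) - c (some (a, j))) ∧
        ∑ j : ZMod (2 * k + 1), w j = 0) := by
    intro a b hab hPb
    obtain ⟨w, hw1, hw2, hw3⟩ := hPb
    choose D hD1 hD2 hD3 using fun j : ZMod (2 * k + 1) =>
      bq_negLift hr0 (hgridneg a b j j hab (Or.inr rfl))
    choose E hE1 hE2 hE3 using fun j : ZMod (2 * k + 1) =>
      bq_negLift hr0 (hgridneg a b (j + 1) j hab (Or.inl (by ring)))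
    have hkey : ∀ j : ZMod (2 * k + 1), D (j + 1) - E j = w j := by
      intro j
      apply bq_liftUnique hr0
      · rw [AddCircle.coe_sub, hD3, hE3, hw2]
        abel
      · have h1 := hD1 (j + 1); have h2 := hD2 (j + 1)
        have h3 := hE1 j; have h4 := hE2 j
        have h5 := hw1 j
        rw [abs_le] at h5
        rw [abs_lt]
        constructor <;> linarith
    refine ⟨fun j => D j - E j, ?_, ?_, ?_⟩
    · intro j
      show |D j - E j| ≤ r - 2
      have h1 := hD1 j; have h2 := hD2 j; have h3 := hE1 j; have h4 := hE2 j
      rw [abs_le]; constructor <;> linarith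
    · intro j
      show ((D j - E j : ℝ) : AddCircle r) = _
      rw [AddCircle.coe_sub, hD3, hE3]
      abel
    · show ∑ j : ZMod (2 * k + 1), (D j - E j) = 0
      have h1 : ∑ j : ZMod (2 * k + 1), (D j - E j)
          = ∑ j : ZMod (2 * k + 1), D j - ∑ j : ZMod (2 * k + 1), E j :=
        Finset.sum_sub_distrib _ _
      have h2 : ∑ j : ZMod (2 * k + 1), D j = ∑ j : ZMod (2 * k + 1), D (j + 1) :=
        (Fintype.sum_equiv (Equiv.addRight (1 : ZMod (2 * k + 1))) _ _ (fun j => rfl)).symm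
      have h3 : ∑ j : ZMod (2 * k + 1), (D (j + 1) - E j)
          = ∑ j : ZMod (2 * k + 1), D (j + 1) - ∑ j : ZMod (2 * k + 1), E j :=
        Finset.sum_sub_distrib _ _
      have h4 : ∑ j : ZMod (2 * k + 1), (D (j + 1) - E j) = ∑ j : ZMod (2 * k + 1), w j :=
        Finset.sum_congr rfl (fun j _ => hkey j)
      rw [h1, h2, ← h3, h4, hw3]
  have hbase : ∃ w : ZMod (2 * k + 1) → ℝ, (∀ j, |w j| ≤ r - 2) ∧
      (∀ j, ((w j : ℝ) : AddCircle r)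
        = c (some ((⟨ℓ - 1, by omega⟩ : Fin ℓ), j + 1))
          - c (some ((⟨ℓ - 1, by omega⟩ : Fin ℓ), j))) ∧
      ∑ j : ZMod (2 * k + 1), w j = 0 := by
    choose H hH1 hH2 hH3 using fun j : ZMod (2 * k + 1) => bq_negLift hr0 (hu j)
    refine ⟨fun j => H (j + 1) - H j, ?_, ?_, ?_⟩
    · intro j
      show |H (j + 1) - H j| ≤ r - 2
      have h1 := hH1 (j + 1); have h2 := hH2 (j + 1); have h3 := hH1 j; have h4 := hH2 j
      rw [abs_le]; constructor <;> linarith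
    · intro j
      show ((H (j + 1) - H j : ℝ) : AddCircle r) = _
      rw [AddCircle.coe_sub, hH3, hH3]
      abel
    · show ∑ j : ZMod (2 * k + 1), (H (j + 1) - H j) = 0
      have h1 : ∑ j : ZMod (2 * k + 1), (H (j + 1) - H j)
          = ∑ j : ZMod (2 * k + 1), H (j + 1) - ∑ j : ZMod (2 * k + 1), H j :=
        Finset.sum_sub_distrib _ _
      have h2 : ∑ j : ZMod (2 * k + 1), H (j + 1) = ∑ j : ZMod (2 * k + 1), H j :=
        Fintype.sum_equiv (Equiv.addRight (1 : ZMod (2 * k + 1))) _ _ (fun j => rfl)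
      rw [h1, h2, sub_self]
  have hmain : ∀ (d : ℕ) (hd : ℓ - 1 - d < ℓ),
      ∃ w : ZMod (2 * k + 1) → ℝ, (∀ j, |w j| ≤ r - 2) ∧
      (∀ j, ((w j : ℝ) : AddCircle r)
        = c (some ((⟨ℓ - 1 - d, hd⟩ : Fin ℓ), j + 1))
          - c (some ((⟨ℓ - 1 - d, hd⟩ : Fin ℓ), j))) ∧
      ∑ j : ZMod (2 * k + 1), w j = 0 := by
    intro d
    induction d with
    | zero =>
      intro hd
      have e : ∀ (hh : ℓ - 1 - 0 < ℓ), (⟨ℓ - 1 - 0, hh⟩ : Fin ℓ) = ⟨ℓ - 1, by omega⟩ :=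
        fun hh => Fin.ext (show ℓ - 1 - 0 = ℓ - 1 by omega)
      rw [e]
      exact hbase
    | succ d ih =>
      intro hd
      by_cases hcase : ℓ - 1 ≤ d
      · have e : ∀ (hh : ℓ - 1 - (d + 1) < ℓ),
            (⟨ℓ - 1 - (d + 1), hh⟩ : Fin ℓ) = ⟨ℓ - 1 - d, by omega⟩ :=
          fun hh => Fin.ext (show ℓ - 1 - (d + 1) = ℓ - 1 - d by omega)
        rw [e]
        exact ih (by omega)
      · exact hstep ⟨ℓ - 1 - (d + 1), hd⟩ ⟨ℓ - 1 - d, by omega⟩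
          (show ℓ - 1 - d = ℓ - 1 - (d + 1) + 1 by omega) (ih (by omega))
  -- the telescoping lift for row 1
  have hrow1 : ∃ w : ZMod (2 * k + 1) → ℝ, (∀ j, |w j| ≤ r - 2) ∧
      (∀ j, ((w j : ℝ) : AddCircle r) = c (some (a1, j + 1)) - c (some (a1, j))) ∧
      ∑ j : ZMod (2 * k + 1), w j = 0 := by
    have e : ∀ (hh : ℓ - 1 - (ℓ - 2) < ℓ), (⟨ℓ - 1 - (ℓ - 2), hh⟩ : Fin ℓ) = a1 :=
      fun hh => Fin.ext (show ℓ - 1 - (ℓ - 2) = 1 by omega)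
    have h2 := hmain (ℓ - 2) (by omega)
    rwa [e] at h2
  obtain ⟨w, hw1, hw2, hw3⟩ := hrow1
  -- lifts of the edges between rows 0 and 1
  choose D hD1 hD2 hD3 using fun j : ZMod (2 * k + 1) =>
    bq_negLift hr0 (hgridneg a0 a1 j j rfl (Or.inr rfl))
  choose G hG1 hG2 hG3 using fun j : ZMod (2 * k + 1) =>
    bq_negLift hr0 (hgridneg a0 a1 j (j - 1) rfl (Or.inl rfl))
  choose P hP1 hP2 using fun j : ZMod (2 * k + 1) => bq_posLift hr0 (hpos j)
  have hε : r / 2 - 1 < 1 := by linarith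
  -- coe values of the two chord-lift families
  have hΔcoe : ∀ j : ZMod (2 * k + 1), ((P j - D j : ℝ) : AddCircle r)
      = c (some (a1, j + (k : ZMod (2 * k + 1)))) - c (some (a1, j)) := by
    intro j
    rw [AddCircle.coe_sub, hP2, hD3]
    abel
  have hΔ'coe : ∀ j : ZMod (2 * k + 1), ((P j - G j : ℝ) : AddCircle r)
      = c (some (a1, j + (k : ZMod (2 * k + 1)))) - c (some (a1, j - 1)) := by
    intro j
    rw [AddCircle.coe_sub, hP2, hG3]
    abel
  -- index arithmetic in `ZMod (2k+1)`
  have hzm2 : (2 : ZMod (2 * k + 1)) * (k : ZMod (2 * k + 1)) + 1 = 0 := by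
    have hzm : ((2 * k + 1 : ℕ) : ZMod (2 * k + 1)) = 0 := ZMod.natCast_self _
    push_cast at hzm
    linear_combination hzm
  -- the pairing identity
  have hpair : ∀ i : ZMod (2 * k + 1),
      (P i - D i) + (P (i + (k : ZMod (2 * k + 1)) + 1) - G (i + (k : ZMod (2 * k + 1)) + 1))
        = -r := by
    intro i
    have e1 : (i + (k : ZMod (2 * k + 1)) + 1) + (k : ZMod (2 * k + 1)) = i := by
      linear_combination hzm2
    have e2 : (i + (k : ZMod (2 * k + 1)) + 1) - 1 = i + (k : ZMod (2 * k + 1)) := by ring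
    have hc0 : ((((P i - D i) + (P (i + (k : ZMod (2 * k + 1)) + 1)
        - G (i + (k : ZMod (2 * k + 1)) + 1)) : ℝ)) : AddCircle r) = ((0 : ℝ) : AddCircle r) := by
      rw [AddCircle.coe_add, hΔcoe, hΔ'coe, e1, e2]
      have e0 : ((0 : ℝ) : AddCircle r) = 0 := rfl
      rw [e0]
      abel
    obtain ⟨n, hn⟩ := bq_coe_eq_iff' hc0
    rw [sub_zero] at hn
    have hb1 := hD1 i; have hb2 := hD2 i
    have hb3 := hG1 (i + (k : ZMod (2 * k + 1)) + 1)
    have hb4 := hG2 (i + (k : ZMod (2 * k + 1)) + 1)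
    have hb5 := abs_le.1 (hP1 i)
    have hb6 := abs_le.1 (hP1 (i + (k : ZMod (2 * k + 1)) + 1))
    have hub : (n : ℝ) * r < 0 := by rw [← hn]; linarith
    have hlb : -(2 * r) < (n : ℝ) * r := by rw [← hn]; linarith
    have hn0 : (n : ℝ) < 0 := by nlinarith
    have hn2 : -2 < (n : ℝ) := by nlinarith
    have hn3 : n = -1 := by
      have q1 : n < 0 := by exact_mod_cast hn0
      have q2 : -2 < n := by exact_mod_cast hn2
      omega
    rw [hn3] at hn
    push_cast at hn
    linarith
  -- summing the pairing identity
  have hsum1 : (∑ j : ZMod (2 * k + 1), (P j - D j)) + (∑ j : ZMod (2 * k + 1), (P j - G j))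
      = -(((2 * k + 1 : ℕ) : ℝ) * r) := by
    have h1 : ∑ i : ZMod (2 * k + 1), ((P i - D i) + (P (i + (k : ZMod (2 * k + 1)) + 1)
        - G (i + (k : ZMod (2 * k + 1)) + 1))) = ∑ _i : ZMod (2 * k + 1), (-r) :=
      Finset.sum_congr rfl (fun i _ => hpair i)
    rw [Finset.sum_add_distrib] at h1
    have h2 : ∑ i : ZMod (2 * k + 1), (P (i + (k : ZMod (2 * k + 1)) + 1)
        - G (i + (k : ZMod (2 * k + 1)) + 1)) = ∑ i : ZMod (2 * k + 1), (P i - G i) :=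
      Fintype.sum_equiv (Equiv.addRight ((k : ZMod (2 * k + 1)) + 1)) _ _
        (fun i => by rw [Equiv.coe_addRight, add_assoc])
    rw [h2] at h1
    have h3 : ∑ _i : ZMod (2 * k + 1), (-r) = ((2 * k + 1 : ℕ) : ℝ) * (-r) := by
      rw [Finset.sum_const, Finset.card_univ, ZMod.card, nsmul_eq_mul]
    rw [h3] at h1
    linarith
  -- the two sums agree, by the telescoping lift of row 1
  have hdiff : ∑ j : ZMod (2 * k + 1), (P j - D j) = ∑ j : ZMod (2 * k + 1), (P j - G j) := by
    have hj : ∀ j : ZMod (2 * k + 1), (P j - D j) - (P j - G j) = -(w (j - 1)) := by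
      intro j
      apply bq_liftUnique hr0
      · rw [AddCircle.coe_sub, AddCircle.coe_neg, hΔcoe, hΔ'coe, hw2]
        have e : (j - 1) + 1 = j := by ring
        rw [e]
        abel
      · have h1 := hD1 j; have h2 := hD2 j; have h3 := hG1 j; have h4 := hG2 j
        have h5 := abs_le.1 (hw1 (j - 1))
        rw [abs_lt]
        constructor <;> nlinarith
    have h1 : ∑ j : ZMod (2 * k + 1), ((P j - D j) - (P j - G j))
        = ∑ j : ZMod (2 * k + 1), -(w (j - 1)) := Finset.sum_congr rfl (fun j _ => hj j)
    rw [Finset.sum_sub_distrib] at h1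
    have h2 : ∑ j : ZMod (2 * k + 1), -(w (j - 1)) = -∑ j : ZMod (2 * k + 1), w (j - 1) := by
      rw [Finset.sum_neg_distrib]
    have h3 : ∑ j : ZMod (2 * k + 1), w (j - 1) = ∑ j : ZMod (2 * k + 1), w j :=
      Fintype.sum_equiv (Equiv.subRight (1 : ZMod (2 * k + 1))) _ _
        (fun j => rfl)
    rw [h2, h3, hw3, neg_zero] at h1
    linarith
  -- the first sum is an integer multiple of r
  have hfin : ((∑ j : ZMod (2 * k + 1), (P j - D j) : ℝ) : AddCircle r)
      = (((0 : ℝ)) : AddCircle r) := by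
    have hmap : ((∑ j : ZMod (2 * k + 1), (P j - D j) : ℝ) : AddCircle r)
        = ∑ j : ZMod (2 * k + 1), ((P j - D j : ℝ) : AddCircle r) :=
      map_sum (QuotientAddGroup.mk' (AddSubgroup.zmultiples r)) _ Finset.univ
    rw [hmap]
    have h1 : ∀ j : ZMod (2 * k + 1),
        (((P j - D j : ℝ)) : AddCircle r)
          = c (some (a1, j + (k : ZMod (2 * k + 1)))) - c (some (a1, j)) := fun j => hΔcoe j
    rw [Finset.sum_congr rfl (fun j _ => h1 j), Finset.sum_sub_distrib]
    have h2 : ∑ j : ZMod (2 * k + 1), c (some (a1, j + (k : ZMod (2 * k + 1))))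
        = ∑ j : ZMod (2 * k + 1), c (some (a1, j)) :=
      Fintype.sum_equiv (Equiv.addRight ((k : ZMod (2 * k + 1)))) _ _
        (fun j => by rw [Equiv.coe_addRight])
    rw [h2, sub_self]
    norm_num
  obtain ⟨n, hn⟩ := bq_coe_eq_iff' hfin
  rw [sub_zero] at hn
  -- the parity contradiction
  have hfinal : 2 * ((n : ℝ) * r) = -(((2 * k + 1 : ℕ) : ℝ) * r) := by
    rw [← hn]
    linarith
  have hcast : 2 * (n : ℝ) + ((2 * k + 1 : ℕ) : ℝ) = 0 := by
    have h9 : (2 * (n : ℝ) + ((2 * k + 1 : ℕ) : ℝ)) * r = 0 := by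
      have e : (2 * (n : ℝ) + ((2 * k + 1 : ℕ) : ℝ)) * r
          = 2 * ((n : ℝ) * r) + ((2 * k + 1 : ℕ) : ℝ) * r := by ring
      rw [e, hfinal]
      ring
    rcases mul_eq_zero.1 h9 with h | h
    · exact h
    · linarith
  have hz : 2 * n + ((2 * k + 1 : ℕ) : ℤ) = 0 := by exact_mod_cast hcast
  omega

private lemma bq_norm4 {v : ℝ} (h : |v| ≤ 2) : ‖(v : AddCircle (4:ℝ))‖ = |v| := by
  rw [AddCircle.norm_coe_eq_abs_iff (p := (4:ℝ)) (by norm_num)]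
  rw [(by norm_num : |(4:ℝ)| = 4)]
  linarith

private lemma bq_dist4 (a b v : ℝ) (hv : |v| ≤ 2) (h1 : 1 ≤ |v|) (n : ℤ)
    (he : a - b - v = n * 4) :
    1 ≤ dist ((a : ℝ) : AddCircle (4:ℝ)) ((b : ℝ) : AddCircle (4:ℝ)) := by
  rw [dist_eq_norm, ← AddCircle.coe_sub]
  have e : ((a - b : ℝ) : AddCircle (4:ℝ)) = ((v : ℝ) : AddCircle (4:ℝ)) :=
    bq_coe_eq_of_sub 4 _ _ n (by linarith)
  rw [e, bq_norm4 hv]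
  exact h1

private lemma bq_dist4' (a b v : ℝ) (hv : |v| ≤ 2) (h1 : 1 ≤ |v|) (n : ℤ)
    (he : a - (b + 2) - v = n * 4) :
    1 ≤ dist ((a : ℝ) : AddCircle (4:ℝ))
      (((b : ℝ) : AddCircle (4:ℝ)) + ((4 / 2 : ℝ) : AddCircle (4:ℝ))) := by
  rw [← AddCircle.coe_add, dist_eq_norm, ← AddCircle.coe_sub]
  have e : ((a - (b + 4 / 2) : ℝ) : AddCircle (4:ℝ)) = ((v : ℝ) : AddCircle (4:ℝ)) :=
    bq_coe_eq_of_sub 4 _ _ n (by norm_num; linarith)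
  rw [e, bq_norm4 hv]
  exact h1

private noncomputable def bqF (n : ℕ) : ℝ := if n = 0 then 0 else if n % 2 = 1 then 1 else 3

private noncomputable def bqC (ℓ k : ℕ) : Option (Fin ℓ × ZMod (2 * k + 1)) → AddCircle (4:ℝ)
  | none => ((2 : ℝ) : AddCircle (4:ℝ))
  | some p => ((bqF (p.1 : ℕ) : ℝ) : AddCircle (4:ℝ))

private lemma bq_grid_not_pos {ℓ k : ℕ} (hk : 1 ≤ k) {a b : Fin ℓ × ZMod (2 * k + 1)}
    (hab : (b.1 : ℕ) = (a.1 : ℕ) + 1) (hj : b.2 = a.2 - 1 ∨ b.2 = a.2) :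
    ¬ (bqOddPos ℓ k (some a) (some b) ∨ bqOddPos ℓ k (some b) (some a)) := by
  have hk0 : ((k : ℕ) : ZMod (2 * k + 1)) ≠ 0 := by
    rw [Ne, ZMod.natCast_eq_zero_iff]
    intro h
    have := Nat.le_of_dvd (by omega) h
    omega
  have hk1 : ((k : ℕ) : ZMod (2 * k + 1)) ≠ -1 := by
    intro h
    have h2 : (((k + 1 : ℕ)) : ZMod (2 * k + 1)) = 0 := by push_cast [h]; ring
    rw [ZMod.natCast_eq_zero_iff] at h2
    have := Nat.le_of_dvd (by omega) h2
    omega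
  rintro (hp | hp)
  · obtain ⟨h1, h2, h3⟩ := hp
    rcases hj with hj | hj
    · have h4 : a.2 + (-1 : ZMod (2 * k + 1)) = a.2 + (k : ZMod (2 * k + 1)) := by
        rw [← sub_eq_add_neg, ← hj]; exact h3
      exact hk1 (add_left_cancel h4).symm
    · rw [hj] at h3
      have h4 : a.2 + (0 : ZMod (2 * k + 1)) = a.2 + (k : ZMod (2 * k + 1)) := by
        rw [add_zero]; exact h3
      exact hk0 (add_left_cancel h4).symm
  · obtain ⟨h1, h2, h3⟩ := hp
    omega

private lemma bq_mem4 (ℓ k : ℕ) (hℓ : 2 ≤ ℓ) (hk : 1 ≤ k) :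
    IsSignedCircColoring 4 (BQOdd ℓ k) (bqOddPos ℓ k) (bqC ℓ k) := by
  intro u v huv
  rw [BQOdd, SimpleGraph.fromRel_adj] at huv
  obtain ⟨hne, hrel⟩ := huv
  suffices claim : ∀ x y, bqOddRel ℓ k x y →
      ((if bqOddPos ℓ k x y ∨ bqOddPos ℓ k y x then
          1 ≤ dist (bqC ℓ k x) (bqC ℓ k y + ((4 / 2 : ℝ) : AddCircle (4:ℝ)))
        else 1 ≤ dist (bqC ℓ k x) (bqC ℓ k y)) ∧
       (if bqOddPos ℓ k y x ∨ bqOddPos ℓ k x y then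
          1 ≤ dist (bqC ℓ k y) (bqC ℓ k x + ((4 / 2 : ℝ) : AddCircle (4:ℝ)))
        else 1 ≤ dist (bqC ℓ k y) (bqC ℓ k x))) by
    rcases hrel with h | h
    · exact (claim _ _ h).1
    · exact (claim _ _ h).2
  intro x y hxy
  cases x with
  | none => exact (hxy : False).elim
  | some a =>
    cases y with
    | none =>
      -- edge to u
      have hne1 : (a.1 : ℕ) ≠ 0 := by
        have : (a.1 : ℕ) = ℓ - 1 := hxy
        omega
      have hval : bqF (a.1 : ℕ) = 1 ∨ bqF (a.1 : ℕ) = 3 := by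
        rcases Nat.even_or_odd (a.1 : ℕ) with he | ho
        · right
          have h2 := Nat.even_iff.1 he
          rw [bqF, if_neg hne1, if_neg (by omega)]
        · left
          have h2 := Nat.odd_iff.1 ho
          rw [bqF, if_neg hne1, if_pos h2]
      have hcond : ¬ (bqOddPos ℓ k (some a) none ∨ bqOddPos ℓ k none (some a)) := by
        rintro (hp | hp)
        · exact bq_pos_none_right hp
        · exact bq_pos_none_left hp
      constructor
      · rw [if_neg hcond]
        show 1 ≤ dist ((bqF (a.1 : ℕ) : ℝ) : AddCircle (4:ℝ)) ((2 : ℝ) : AddCircle (4:ℝ))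
        rcases hval with hv | hv <;> rw [hv]
        · exact bq_dist4 1 2 (-1) (by norm_num) (by norm_num) 0 (by norm_num)
        · exact bq_dist4 3 2 1 (by norm_num) (by norm_num) 0 (by norm_num)
      · rw [if_neg (by rw [or_comm] at hcond; exact hcond)]
        show 1 ≤ dist ((2 : ℝ) : AddCircle (4:ℝ)) ((bqF (a.1 : ℕ) : ℝ) : AddCircle (4:ℝ))
        rcases hval with hv | hv <;> rw [hv]
        · exact bq_dist4 2 1 1 (by norm_num) (by norm_num) 0 (by norm_num)
        · exact bq_dist4 2 3 (-1) (by norm_num) (by norm_num) 0 (by norm_num)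
    | some b =>
      rcases hxy with ⟨hab, hj⟩ | hp
      · -- grid (negative) edge
        have hcond := bq_grid_not_pos hk hab hj
        have hvals : (bqF (a.1 : ℕ) = 0 ∧ bqF (b.1 : ℕ) = 1) ∨
            (bqF (a.1 : ℕ) = 1 ∧ bqF (b.1 : ℕ) = 3) ∨
            (bqF (a.1 : ℕ) = 3 ∧ bqF (b.1 : ℕ) = 1) := by
          by_cases ha0 : (a.1 : ℕ) = 0
          · left
            constructor
            · rw [bqF, if_pos ha0]
            · rw [bqF, if_neg (by omega), if_pos (by omega)]
          · rcases Nat.even_or_odd (a.1 : ℕ) with he | ho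
            · right; right
              have h2 := Nat.even_iff.1 he
              constructor
              · rw [bqF, if_neg ha0, if_neg (by omega)]
              · rw [bqF, if_neg (by omega), if_pos (by omega)]
            · right; left
              have h2 := Nat.odd_iff.1 ho
              constructor
              · rw [bqF, if_neg ha0, if_pos h2]
              · rw [bqF, if_neg (by omega), if_neg (by omega)]
        constructor
        · rw [if_neg hcond]
          show 1 ≤ dist ((bqF (a.1 : ℕ) : ℝ) : AddCircle (4:ℝ)) ((bqF (b.1 : ℕ) : ℝ) : AddCircle (4:ℝ))
          rcases hvals with ⟨h1, h2⟩ | ⟨h1, h2⟩ | ⟨h1, h2⟩ <;> rw [h1, h2]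
          · exact bq_dist4 0 1 (-1) (by norm_num) (by norm_num) 0 (by norm_num)
          · exact bq_dist4 1 3 (-2) (by norm_num) (by norm_num) 0 (by norm_num)
          · exact bq_dist4 3 1 2 (by norm_num) (by norm_num) 0 (by norm_num)
        · rw [if_neg (by rw [or_comm] at hcond; exact hcond)]
          show 1 ≤ dist ((bqF (b.1 : ℕ) : ℝ) : AddCircle (4:ℝ)) ((bqF (a.1 : ℕ) : ℝ) : AddCircle (4:ℝ))
          rcases hvals with ⟨h1, h2⟩ | ⟨h1, h2⟩ | ⟨h1, h2⟩ <;> rw [h1, h2]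
          · exact bq_dist4 1 0 1 (by norm_num) (by norm_num) 0 (by norm_num)
          · exact bq_dist4 3 1 2 (by norm_num) (by norm_num) 0 (by norm_num)
          · exact bq_dist4 1 3 (-2) (by norm_num) (by norm_num) 0 (by norm_num)
      · -- positive edge
        obtain ⟨h1, h2, h3⟩ := hp
        have hfa : bqF (a.1 : ℕ) = 0 := by rw [bqF, if_pos h1]
        have hfb : bqF (b.1 : ℕ) = 1 := by rw [bqF, if_neg (by omega), if_pos (by omega)]
        constructor
        · rw [if_pos (Or.inl ⟨h1, h2, h3⟩)]
          show 1 ≤ dist ((bqF (a.1 : ℕ) : ℝ) : AddCircle (4:ℝ))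
            (((bqF (b.1 : ℕ) : ℝ) : AddCircle (4:ℝ)) + ((4 / 2 : ℝ) : AddCircle (4:ℝ)))
          rw [hfa, hfb]
          exact bq_dist4' 0 1 1 (by norm_num) (by norm_num) (-1) (by norm_num)
        · rw [if_pos (Or.inr ⟨h1, h2, h3⟩)]
          show 1 ≤ dist ((bqF (b.1 : ℕ) : ℝ) : AddCircle (4:ℝ))
            (((bqF (a.1 : ℕ) : ℝ) : AddCircle (4:ℝ)) + ((4 / 2 : ℝ) : AddCircle (4:ℝ)))
          rw [hfa, hfb]
          exact bq_dist4' 1 0 (-1) (by norm_num) (by norm_num) 0 (by norm_num)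

/-- For integers `ℓ ≥ 2` and `k ≥ 1`, the circular chromatic number of the signed bipartite
graph `BQ̂(ℓ, 2k+1)` equals `4`. -/
theorem chiC_BQOdd (ℓ k : ℕ) (hℓ : 2 ≤ ℓ) (hk : 1 ≤ k) :
    sInf {r : ℝ | 2 ≤ r ∧ ∃ c : Option (Fin ℓ × ZMod (2 * k + 1)) → AddCircle r,
      IsSignedCircColoring r (BQOdd ℓ k) (bqOddPos ℓ k) c} = 4 := by
  have h4 : (4 : ℝ) ∈ {r : ℝ | 2 ≤ r ∧ ∃ c : Option (Fin ℓ × ZMod (2 * k + 1)) → AddCircle r,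
      IsSignedCircColoring r (BQOdd ℓ k) (bqOddPos ℓ k) c} :=
    ⟨by norm_num, ⟨bqC ℓ k, bq_mem4 ℓ k hℓ hk⟩⟩
  apply le_antisymm
  · exact csInf_le ⟨2, fun x hx => hx.1⟩ h4
  · apply le_csInf ⟨4, h4⟩
    rintro r ⟨hr2, c, hcol⟩
    by_contra hlt
    push_neg at hlt
    exact bq_no_coloring ℓ k hℓ hk r hr2 hlt c hcol
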